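/- Let m ≥ 1 and n ≥ 0 be integers. For s ∈ {0,…,n} let I_s denote the m×(m+n) complex matrix whose (i,j) entry is 1 if j = i + s and 0 otherwise. Then for every m×(m+n) complex matrix A, the eigenvalue locus E_A = { (x_0,…,x_n) ∈ ℂ^{n+1} : rank(A − Σ_{s=0}^n x_s I_s) < m } is a finite set with at most binomial(m+n, n+1) elements. -/

import Mathlib

/-- The `s`-th unit matrix: the `m × (m+n)` matrix whose `(i,j)` entry is `1`
if `j = i + s` and `0` otherwise (with `0`-based indices). -/
def unitMatrix (m n : ℕ) (s : Fin (n + 1)) : Matrix (Fin m) (Fin (m + n)) ℂ :=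
  Matrix.of fun i j => if (j : ℕ) = (i : ℕ) + (s : ℕ) then 1 else 0

/-- The eigenvalue locus of an `m × (m+n)` complex matrix `A`: the set of tuples
`(x_0,…,x_n) ∈ ℂ^{n+1}` such that `A - ∑ x_s I_s` has rank `< m`. -/
def eigLocus (m n : ℕ) (A : Matrix (Fin m) (Fin (m + n)) ℂ) : Set (Fin (n + 1) → ℂ) :=
  {x | (A - ∑ s : Fin (n + 1), x s • unitMatrix m n s).rank < m}

noncomputable section

namespace EigProof

open MvPolynomial Finset Matrix

variable {m n : ℕ}

/-- The polynomial ring. -/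
abbrev R (n : ℕ) := MvPolynomial (Fin (n + 1)) ℂ

/-- the band entry: `X (j - i)` if `i ≤ j ≤ i + n`, else `0`. -/
def Xe (m n : ℕ) (i : Fin m) (j : Fin (m + n)) : R n :=
  if h : (i : ℕ) ≤ (j : ℕ) ∧ (j : ℕ) ≤ (i : ℕ) + n then
    X (⟨(j : ℕ) - (i : ℕ), by omega⟩ : Fin (n + 1)) else 0

/-- The universal matrix `A - ∑ x_s I_s` with polynomial entries. -/
def Nmat (m n : ℕ) (A : Matrix (Fin m) (Fin (m + n)) ℂ) :
    Matrix (Fin m) (Fin (m + n)) (R n) :=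
  fun i j => C (A i j) - Xe m n i j

lemma eval_Xe (x : Fin (n + 1) → ℂ) (i : Fin m) (j : Fin (m + n)) :
    eval x (Xe m n i j) = ∑ s : Fin (n + 1), x s • (unitMatrix m n s i j) := by
  unfold Xe unitMatrix
  by_cases h : (i : ℕ) ≤ (j : ℕ) ∧ (j : ℕ) ≤ (i : ℕ) + n
  · rw [dif_pos h, eval_X]
    rw [Finset.sum_eq_single (⟨(j : ℕ) - (i : ℕ), by omega⟩ : Fin (n + 1))]
    · simp only [Matrix.of_apply, smul_eq_mul]
      rw [if_pos (show (j:ℕ) = (i:ℕ) + ((j:ℕ) - (i:ℕ)) by omega), mul_one]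
    · intro s _ hs
      simp only [Matrix.of_apply, smul_eq_mul]
      rw [if_neg, mul_zero]
      intro hc
      apply hs
      apply Fin.ext
      simpa using by omega
    · intro hmem; exact absurd (Finset.mem_univ _) hmem
  · rw [dif_neg h, map_zero]
    symm
    apply Finset.sum_eq_zero
    intro s _
    simp only [Matrix.of_apply, smul_eq_mul]
    rw [if_neg, mul_zero]
    intro hc
    apply h
    constructor <;> omega

lemma eval_Nmat (A : Matrix (Fin m) (Fin (m + n)) ℂ) (x : Fin (n + 1) → ℂ)
    (i : Fin m) (j : Fin (m + n)) :
    eval x (Nmat m n A i j) = (A - ∑ s : Fin (n + 1), x s • unitMatrix m n s) i j := by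
  unfold Nmat
  rw [map_sub, eval_C, eval_Xe]
  simp [Matrix.sub_apply, Matrix.sum_apply]


/-- the maximal minor of the universal matrix on columns `c`. -/
def fpoly (m n : ℕ) (A : Matrix (Fin m) (Fin (m + n)) ℂ) (c : Fin m → Fin (m + n)) : R n :=
  ((Nmat m n A).submatrix id c).det

/-- the ideal of polynomials vanishing on the eigenvalue locus. -/
def Zid (m n : ℕ) (A : Matrix (Fin m) (Fin (m + n)) ℂ) : Ideal (R n) where
  carrier := {p | ∀ x ∈ eigLocus m n A, eval x p = 0}
  add_mem' := by intro a b ha hb x hx; rw [map_add, ha x hx, hb x hx, add_zero]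
  zero_mem' := by intro x hx; rw [map_zero]
  smul_mem' := by intro c p hp x hx; rw [smul_eq_mul, _root_.map_mul, hp x hx, mul_zero]

lemma mem_Zid_iff {A : Matrix (Fin m) (Fin (m + n)) ℂ} {p : R n} :
    p ∈ Zid m n A ↔ ∀ x ∈ eigLocus m n A, eval x p = 0 := Iff.rfl

lemma fpoly_mem_Zid (A : Matrix (Fin m) (Fin (m + n)) ℂ) (c : Fin m → Fin (m + n)) :
    fpoly m n A c ∈ Zid m n A := by
  intro x hx
  set Mx := A - ∑ s : Fin (n + 1), x s • unitMatrix m n s with hMx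
  have hev : eval x (fpoly m n A c) = (Mx.submatrix id c).det := by
    unfold fpoly
    rw [RingHom.map_det]
    congr 1
    ext i k
    simp only [RingHom.mapMatrix_apply, Matrix.map_apply, Matrix.submatrix_apply, id_eq]
    rw [eval_Nmat]
  rw [hev]
  -- rank < m gives a nonzero left kernel vector
  have hrank : Mx.rank < m := hx
  have hrt : Mxᵀ.rank < m := by rw [Matrix.rank_transpose]; exact hrank
  have hfin : Mxᵀ.rank + Module.finrank ℂ (LinearMap.ker Mxᵀ.mulVecLin) = m := by
    have := LinearMap.finrank_range_add_finrank_ker (Mxᵀ.mulVecLin)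
    rw [Module.finrank_pi ℂ] at this
    simpa [Matrix.rank] using this
  have hker : LinearMap.ker Mxᵀ.mulVecLin ≠ ⊥ := by
    intro hbot
    rw [hbot, finrank_bot] at hfin
    omega
  obtain ⟨v, hv, hv0⟩ := Submodule.exists_mem_ne_zero_of_ne_bot hker
  have hvz : Mxᵀ.mulVec v = 0 := by
    rw [Matrix.mulVec_transpose]
    simpa [Matrix.mulVecLin_apply] using hv
  have hsub : (Mx.submatrix id c)ᵀ.mulVec v = 0 := by
    funext k
    have : (Mxᵀ.mulVec v) (c k) = 0 := by rw [hvz]; rfl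
    simpa [Matrix.mulVec, dotProduct, Matrix.transpose_apply,
      Matrix.submatrix_apply] using this
  have hdet : (Mx.submatrix id c)ᵀ.det = 0 :=
    (Matrix.exists_mulVec_eq_zero_iff).mp ⟨v, hv0, hsub⟩
  rw [← Matrix.det_transpose]
  exact hdet



/-- total degree of an exponent vector -/
def Deg (γ : Fin (n + 1) →₀ ℕ) : ℕ := ∑ s, γ s
/-- weighted sum of squares -/
def Phi (γ : Fin (n + 1) →₀ ℕ) : ℕ := ∑ s : Fin (n + 1), (s : ℕ) ^ 2 * γ s

lemma Deg_add (a b : Fin (n + 1) →₀ ℕ) : Deg (a + b) = Deg a + Deg b := by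
  unfold Deg; simp [Finset.sum_add_distrib]

lemma Phi_add (a b : Fin (n + 1) →₀ ℕ) : Phi (a + b) = Phi a + Phi b := by
  unfold Phi; simp [mul_add, Finset.sum_add_distrib]

lemma Deg_single (s : Fin (n + 1)) : Deg (Finsupp.single s 1) = 1 := by
  unfold Deg
  rw [Finset.sum_eq_single s] <;> simp [Finsupp.single_apply]
  · intro b hb; simp [Ne.symm hb]

lemma Phi_single (s : Fin (n + 1)) : Phi (Finsupp.single s 1) = (s : ℕ) ^ 2 := by
  unfold Phi
  rw [Finset.sum_eq_single s] <;> simp [Finsupp.single_apply]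
  · intro b hb; simp [Ne.symm hb]

lemma Phi_le (γ : Fin (n + 1) →₀ ℕ) : Phi γ ≤ n ^ 2 * Deg γ := by
  unfold Phi Deg
  rw [Finset.mul_sum]
  apply Finset.sum_le_sum
  intro s _
  have : (s : ℕ) ≤ n := by omega
  exact Nat.mul_le_mul_right _ (Nat.pow_le_pow_left this 2)

lemma totalDegree_monomial_one (γ : Fin (n + 1) →₀ ℕ) :
    (monomial γ (1 : ℂ)).totalDegree = Deg γ := by
  rw [totalDegree_monomial _ one_ne_zero]
  rw [Finsupp.sum_fintype]
  · rfl
  · intro _; rfl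

lemma prod_X_eq_monomial (k : ℕ) (e : Fin k → Fin (n + 1)) :
    (∏ i, (X (e i) : R n)) = monomial (∑ i, Finsupp.single (e i) 1) 1 := by
  induction k with
  | zero => simp [monomial_zero']
  | succ k ih =>
    rw [Fin.prod_univ_succ, Fin.sum_univ_succ, ih (fun i => e i.succ)]
    rw [X, monomial_mul, one_mul]

lemma exists_rep (k : ℕ) (γ : Fin (n + 1) →₀ ℕ) (h : Deg γ = k) :
    ∃ e : Fin k → Fin (n + 1), γ = ∑ i, Finsupp.single (e i) 1 := by
  induction k generalizing γ with
  | zero =>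
    refine ⟨Fin.elim0, ?_⟩
    simp only [Finset.univ_eq_empty, Finset.sum_empty]
    ext s
    have := Finset.sum_eq_zero_iff.mp (h : Deg γ = 0) s (Finset.mem_univ s)
    simpa using this
  | succ k ih =>
    have hex : ∃ s, γ s ≠ 0 := by
      by_contra hc
      push_neg at hc
      have : Deg γ = 0 := Finset.sum_eq_zero (fun s _ => hc s)
      omega
    obtain ⟨s, hs⟩ := hex
    set γ' : Fin (n + 1) →₀ ℕ := γ - Finsupp.single s 1 with hγ'
    have hsum : γ = Finsupp.single s 1 + γ' := by
      ext t
      simp only [hγ', Finsupp.add_apply, Finsupp.tsub_apply, Finsupp.single_apply]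
      by_cases hts : s = t
      · subst hts; simp; omega
      · simp [hts]
    have hdeg : Deg γ' = k := by
      have := Deg_add (Finsupp.single s 1) γ'
      rw [← hsum, Deg_single] at this
      omega
    obtain ⟨e, he⟩ := ih γ' hdeg
    refine ⟨Fin.cons s e, ?_⟩
    rw [Fin.sum_univ_succ]
    simp only [Fin.cons_zero, Fin.cons_succ]
    rw [← he, ← hsum]

lemma exists_mono_rep (k : ℕ) (γ : Fin (n + 1) →₀ ℕ) (h : Deg γ = k) :
    ∃ d : Fin k → Fin (n + 1), Monotone d ∧ γ = ∑ i, Finsupp.single (d i) 1 := by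
  obtain ⟨e, he⟩ := exists_rep k γ h
  refine ⟨e ∘ Tuple.sort e, Tuple.monotone_sort e, ?_⟩
  rw [he]
  exact (Equiv.sum_comp (Tuple.sort e) (fun i => Finsupp.single (e i) 1)).symm

/-- strict rearrangement inequality for products -/
lemma sum_mul_perm_lt {k : ℕ} (c : Fin k → ℕ) (hc : StrictMono c)
    (σ : Equiv.Perm (Fin k)) (hσ : σ ≠ 1) :
    ∑ i, c i * ((σ i : ℕ)) < ∑ i, c i * (i : ℕ) := by
  have hmono : MonovaryOn (fun i => c i) (fun i : Fin k => (i : ℕ)) ↑(Finset.univ : Finset (Fin k)) := by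
    intro i _ j _ hij
    exact (hc.monotone (by exact_mod_cast Fin.le_def.mpr (le_of_lt hij)))
  have hsupp : (Equiv.Perm.support σ).Nonempty := Finset.nonempty_iff_ne_empty.mpr
    (fun hemp => hσ (Equiv.Perm.support_eq_empty_iff.mp hemp))
  set i₀ := (Equiv.Perm.support σ).max' hsupp with hi₀
  have hi₀mem : i₀ ∈ Equiv.Perm.support σ := (Equiv.Perm.support σ).max'_mem hsupp
  have hσi₀ : σ i₀ ≠ i₀ := Equiv.Perm.mem_support.mp hi₀mem
  have hσi₀lt : σ i₀ < i₀ := by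
    have hmem : σ i₀ ∈ Equiv.Perm.support σ := Equiv.Perm.apply_mem_support.mpr hi₀mem
    exact lt_of_le_of_ne ((Equiv.Perm.support σ).le_max' _ hmem) hσi₀
  set j₁ := σ⁻¹ i₀ with hj₁
  have hσj₁ : σ j₁ = i₀ := by simp [hj₁]
  have hj₁ne : j₁ ≠ i₀ := by
    intro hcon
    apply hσi₀; rw [← hcon, hσj₁, hcon]
  have hj₁mem : j₁ ∈ Equiv.Perm.support σ :=
    Equiv.Perm.mem_support.mpr (by rw [hσj₁]; exact Ne.symm hj₁ne)
  have hj₁lt : j₁ < i₀ := lt_of_le_of_ne ((Equiv.Perm.support σ).le_max' _ hj₁mem) hj₁ne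
  have hnm : ¬ MonovaryOn (fun i => c i) ((fun i : Fin k => (i : ℕ)) ∘ σ) ↑(Finset.univ : Finset (Fin k)) := by
    intro hmv
    have : c i₀ ≤ c j₁ := by
      refine hmv (Finset.mem_coe.mpr (Finset.mem_univ i₀)) (Finset.mem_coe.mpr (Finset.mem_univ j₁)) ?_
      simp only [Function.comp_apply, hσj₁]
      exact_mod_cast hσi₀lt
    exact absurd this (not_le.mpr (hc hj₁lt))
  have := (hmono.sum_smul_comp_perm_lt_sum_smul_iff
      (by intro x _; exact Finset.mem_coe.mpr (Finset.mem_univ x))).mpr hnm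
  simpa [smul_eq_mul] using this

lemma perm_sq_gt {k : ℕ} (c : Fin k → ℕ) (hc : StrictMono c)
    (hci : ∀ i : Fin k, (i : ℕ) ≤ c i)
    (σ : Equiv.Perm (Fin k)) (hσ : σ ≠ 1) (hband : ∀ i, ((σ i : ℕ)) ≤ c i) :
    ∑ i, (c i - (i : ℕ)) ^ 2 < ∑ i, (c i - ((σ i : ℕ))) ^ 2 := by
  have hmul := sum_mul_perm_lt c hc σ hσ
  have hcast1 : ((∑ i, (c i - ((σ i : ℕ))) ^ 2 : ℕ) : ℤ) = ∑ i, ((c i : ℤ) - ((σ i : ℕ) : ℤ)) ^ 2 := by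
    push_cast
    apply Finset.sum_congr rfl
    intro i _
    rw [Nat.cast_sub (hband i)]
    try push_cast
    try ring
  have hcast2 : ((∑ i, (c i - (i : ℕ)) ^ 2 : ℕ) : ℤ) = ∑ i, ((c i : ℤ) - ((i : ℕ) : ℤ)) ^ 2 := by
    push_cast
    apply Finset.sum_congr rfl
    intro i _
    rw [Nat.cast_sub (hci i)]
    try push_cast
    try ring
  have hsq : ∑ i, ((σ i : ℕ) : ℤ) ^ 2 = ∑ i : Fin k, ((i : ℕ) : ℤ) ^ 2 :=
    Equiv.sum_comp σ (fun j : Fin k => ((j : ℕ) : ℤ) ^ 2)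
  have hz : (∑ i, ((c i : ℤ) - (i : ℕ)) ^ 2) < ∑ i, ((c i : ℤ) - ((σ i : ℕ))) ^ 2 := by
    have e1 : ∀ (f : Fin k → ℤ), ∑ i, ((c i : ℤ) - f i) ^ 2
        = ∑ i, ((c i : ℤ) ^ 2 + (f i) ^ 2 - 2 * (c i : ℤ) * f i) := by
      intro f; apply Finset.sum_congr rfl; intro i _; ring
    rw [e1, e1]
    rw [Finset.sum_sub_distrib, Finset.sum_sub_distrib, Finset.sum_add_distrib,
      Finset.sum_add_distrib, hsq]
    have : (∑ i, 2 * (c i : ℤ) * ((σ i : ℕ) : ℤ)) < ∑ i, 2 * (c i : ℤ) * ((i : ℕ) : ℤ) := by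
      have : ((∑ i, c i * ((σ i : ℕ)) : ℕ) : ℤ) < ((∑ i, c i * (i : ℕ) : ℕ) : ℤ) := by
        exact_mod_cast hmul
      push_cast at this
      calc (∑ i, 2 * (c i : ℤ) * ((σ i : ℕ) : ℤ)) = 2 * ∑ i, (c i : ℤ) * ((σ i : ℕ) : ℤ) := by
            rw [Finset.mul_sum]; apply Finset.sum_congr rfl; intro i _; ring
        _ < 2 * ∑ i, (c i : ℤ) * ((i : ℕ) : ℤ) := by omega
        _ = ∑ i, 2 * (c i : ℤ) * ((i : ℕ) : ℤ) := by
            rw [Finset.mul_sum]; apply Finset.sum_congr rfl; intro i _; ring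
    omega
  have := hz
  rw [← hcast1, ← hcast2] at this
  exact_mod_cast this


lemma Deg_zero : Deg (0 : Fin (n + 1) →₀ ℕ) = 0 := by unfold Deg; simp

lemma Phi_zero : Phi (0 : Fin (n + 1) →₀ ℕ) = 0 := by unfold Phi; simp

lemma Deg_sum {ι : Type*} (s : Finset ι) (f : ι → (Fin (n + 1) →₀ ℕ)) :
    Deg (∑ i ∈ s, f i) = ∑ i ∈ s, Deg (f i) := by
  induction s using Finset.cons_induction with
  | empty => simp [Deg_zero]
  | cons a s ha ih => rw [Finset.sum_cons, Finset.sum_cons, Deg_add, ih]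

lemma Phi_sum {ι : Type*} (s : Finset ι) (f : ι → (Fin (n + 1) →₀ ℕ)) :
    Phi (∑ i ∈ s, f i) = ∑ i ∈ s, Phi (f i) := by
  induction s using Finset.cons_induction with
  | empty => simp [Phi_zero]
  | cons a s ha ih => rw [Finset.sum_cons, Finset.sum_cons, Phi_add, ih]

lemma totalDegree_Xe_le (i : Fin m) (j : Fin (m + n)) : (Xe m n i j).totalDegree ≤ 1 := by
  unfold Xe
  split
  · exact le_of_eq (totalDegree_X _)
  · simp

lemma neg_one_pow_C (k : ℕ) : ((-1 : R n)) ^ k = C ((-1 : ℂ) ^ k) := by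
  rw [_root_.map_pow, _root_.map_neg, _root_.map_one]

lemma sign_cast (σ : Equiv.Perm (Fin m)) :
    (((Equiv.Perm.sign σ : ℤ) : R n)) = C (((Equiv.Perm.sign σ : ℤ) : ℂ)) :=
  (map_intCast (C : ℂ →+* R n) _).symm

lemma prod_decomp {ι : Type*} [DecidableEq ι] (s : Finset ι) (a : ι → ℂ) (q : ι → R n)
    (hq : ∀ i, (q i).totalDegree ≤ 1) :
    ∃ r : R n, ∏ i ∈ s, (C (a i) - q i) = (-1 : R n) ^ s.card * ∏ i ∈ s, q i + r ∧
      (r = 0 ∨ r.totalDegree < s.card) := by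
  induction s using Finset.induction_on with
  | empty => exact ⟨0, by simp, Or.inl rfl⟩
  | @insert i s hi ih =>
    obtain ⟨r, hr, hcase⟩ := ih
    have hprodq : (∏ j ∈ s, q j).totalDegree ≤ s.card := by
      refine (totalDegree_finset_prod s q).trans ?_
      calc ∑ j ∈ s, (q j).totalDegree ≤ ∑ _j ∈ s, 1 := Finset.sum_le_sum (fun j _ => hq j)
        _ = s.card := by simp
    have hB : ((-1 : R n) ^ s.card * ∏ j ∈ s, q j).totalDegree ≤ s.card := by
      refine (totalDegree_mul _ _).trans ?_
      rw [neg_one_pow_C, totalDegree_C]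
      simpa using hprodq
    refine ⟨C (a i) * ((-1 : R n) ^ s.card * ∏ j ∈ s, q j + r) - q i * r, ?_, ?_⟩
    · rw [Finset.prod_insert hi, Finset.prod_insert hi, Finset.card_insert_of_notMem hi, hr]
      ring
    · right
      rw [Finset.card_insert_of_notMem hi]
      rcases hcase with h0 | hlt
      · subst h0
        simp only [mul_zero, sub_zero, add_zero]
        have : (C (a i) * ((-1 : R n) ^ s.card * ∏ j ∈ s, q j)).totalDegree ≤ s.card := by
          refine (totalDegree_mul _ _).trans ?_
          rw [totalDegree_C]
          simpa using hB
        omega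
      · have h1 : (C (a i) * ((-1 : R n) ^ s.card * ∏ j ∈ s, q j + r)).totalDegree ≤ s.card := by
          refine (totalDegree_mul _ _).trans ?_
          rw [totalDegree_C, zero_add]
          exact le_trans (totalDegree_add _ _) (max_le hB (le_of_lt hlt))
        have h2 : (q i * r).totalDegree ≤ s.card := by
          refine (totalDegree_mul _ _).trans ?_
          have := hq i
          omega
        have := totalDegree_sub (C (a i) * ((-1 : R n) ^ s.card * ∏ j ∈ s, q j + r)) (q i * r)
        have hmax : max (C (a i) * ((-1 : R n) ^ s.card * ∏ j ∈ s, q j + r)).totalDegree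
            (q i * r).totalDegree ≤ s.card := max_le h1 h2
        omega

/-- the staircase columns associated to a weakly monotone tuple -/
def cF (d : Fin m → Fin (n + 1)) (i : Fin m) : Fin (m + n) :=
  ⟨(d i : ℕ) + (i : ℕ), by have h1 := (d i).isLt; have h2 := i.isLt; omega⟩

lemma deg_m_red (hm : 1 ≤ m) (A : Matrix (Fin m) (Fin (m + n)) ℂ) :
    ∀ (j : ℕ) (γ : Fin (n + 1) →₀ ℕ), Deg γ = m → n ^ 2 * m - Phi γ = j →
    ∃ q : R n, q.totalDegree ≤ m - 1 ∧ monomial γ 1 - q ∈ Zid m n A := by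
  intro j
  induction j using Nat.strong_induction_on with
  | _ j IH =>
  intro γ hdeg hj
  obtain ⟨d, hdmono, hγ⟩ := exists_mono_rep m γ hdeg
  set c : Fin m → Fin (m + n) := cF d with hcdef
  have hcval : ∀ i, (c i : ℕ) = (d i : ℕ) + (i : ℕ) := fun i => rfl
  have hdlt : ∀ i, (d i : ℕ) ≤ n := fun i => by have := (d i).isLt; omega
  have hstrict : StrictMono (fun i : Fin m => (c i : ℕ)) := by
    intro i k hik
    have hmono := hdmono (le_of_lt hik)
    have h1 : (i : ℕ) < (k : ℕ) := hik
    have h2 : (d i : ℕ) ≤ (d k : ℕ) := hmono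
    show (c i : ℕ) < (c k : ℕ)
    rw [hcval, hcval]
    omega
  have hci : ∀ i : Fin m, (i : ℕ) ≤ (c i : ℕ) := fun i => by rw [hcval]; omega
  -- the permutation products
  set G : Equiv.Perm (Fin m) → R n := fun σ => ∏ i, Xe m n (σ i) (c i) with hGdef
  -- determinant expansion
  have hdet0 : fpoly m n A c = ∑ σ : Equiv.Perm (Fin m),
      ((Equiv.Perm.sign σ : ℤ) : R n) * ∏ i, (C (A (σ i) (c i)) - Xe m n (σ i) (c i)) := by
    unfold fpoly
    rw [Matrix.det_apply']
    rfl
  have hchoice : ∀ σ : Equiv.Perm (Fin m), ∃ r : R n,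
      ∏ i, (C (A (σ i) (c i)) - Xe m n (σ i) (c i)) = (-1 : R n) ^ m * G σ + r ∧
        (r = 0 ∨ r.totalDegree < m) := by
    intro σ
    obtain ⟨r, hr, hc2⟩ := prod_decomp (Finset.univ : Finset (Fin m))
      (fun i => A (σ i) (c i)) (fun i => Xe m n (σ i) (c i)) (fun i => totalDegree_Xe_le _ _)
    have hcard : (Finset.univ : Finset (Fin m)).card = m := by simp
    rw [hcard] at hr hc2
    exact ⟨r, hr, hc2⟩
  choose rf hrf hrfc using hchoice
  -- G at the identity
  have hG1 : G 1 = monomial γ 1 := by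
    have hent : ∀ i : Fin m, Xe m n ((1 : Equiv.Perm (Fin m)) i) (c i) = X (d i) := by
      intro i
      have hcond : ((1 : Equiv.Perm (Fin m)) i : ℕ) ≤ (c i : ℕ) ∧
          (c i : ℕ) ≤ ((1 : Equiv.Perm (Fin m)) i : ℕ) + n := by
        simp only [Equiv.Perm.one_apply]
        rw [hcval]
        exact ⟨by omega, by have := hdlt i; omega⟩
      unfold Xe
      rw [dif_pos hcond]
      congr 1
      apply Fin.ext
      simp only [Equiv.Perm.one_apply]
      rw [hcval]
      omega
    rw [hGdef]
    simp only []
    rw [Finset.prod_congr rfl (fun i _ => hent i), prod_X_eq_monomial, ← hγ]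
  -- classification of the other terms
  have hGσ : ∀ σ : Equiv.Perm (Fin m), σ ≠ 1 →
      G σ = 0 ∨ ∃ δ, G σ = monomial δ 1 ∧ Deg δ = m ∧ Phi γ < Phi δ := by
    intro σ hσ
    by_cases hband : ∀ i : Fin m, (σ i : ℕ) ≤ (c i : ℕ) ∧ (c i : ℕ) ≤ (σ i : ℕ) + n
    · right
      have hent : ∀ i : Fin m, Xe m n (σ i) (c i) =
          X (⟨(c i : ℕ) - (σ i : ℕ), by have := (hband i).1; have := (hband i).2; omega⟩ :
            Fin (n + 1)) := by
        intro i
        unfold Xe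
        rw [dif_pos (hband i)]
      refine ⟨∑ i : Fin m, Finsupp.single
        (⟨(c i : ℕ) - (σ i : ℕ), by have := (hband i).1; have := (hband i).2; omega⟩ :
          Fin (n + 1)) 1, ?_, ?_, ?_⟩
      · rw [hGdef]
        simp only []
        rw [Finset.prod_congr rfl (fun i _ => hent i), prod_X_eq_monomial]
      · rw [Deg_sum]
        simp [Deg_single]
      · have hPhiδ : Phi (∑ i : Fin m, Finsupp.single
            (⟨(c i : ℕ) - (σ i : ℕ), by have := (hband i).1; have := (hband i).2; omega⟩ :
              Fin (n + 1)) 1) = ∑ i : Fin m, ((c i : ℕ) - (σ i : ℕ)) ^ 2 := by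
          rw [Phi_sum]
          apply Finset.sum_congr rfl
          intro i _
          rw [Phi_single]
        have hPhiγ : Phi γ = ∑ i : Fin m, ((c i : ℕ) - (i : ℕ)) ^ 2 := by
          rw [hγ, Phi_sum]
          apply Finset.sum_congr rfl
          intro i _
          rw [Phi_single]
          congr 1
          rw [hcval]
          omega
        rw [hPhiδ, hPhiγ]
        exact perm_sq_gt (fun i => (c i : ℕ)) hstrict hci σ hσ (fun i => (hband i).1)
    · left
      push_neg at hband
      obtain ⟨i, hib⟩ := hband
      have hzero : Xe m n (σ i) (c i) = 0 := by
        unfold Xe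
        rw [dif_neg]
        intro hcon
        rcases hcon with ⟨h1, h2⟩
        by_cases hle : (σ i : ℕ) ≤ (c i : ℕ)
        · exact absurd (hib hle) (by omega)
        · exact hle h1
      rw [hGdef]
      simp only []
      exact Finset.prod_eq_zero (Finset.mem_univ i) hzero
  -- reduce each non-identity term
  have hterm : ∀ σ : Equiv.Perm (Fin m), σ ≠ 1 → ∃ qσ : R n,
      qσ.totalDegree ≤ m - 1 ∧ ((Equiv.Perm.sign σ : ℤ) : R n) * G σ - qσ ∈ Zid m n A := by
    intro σ hσ
    rcases hGσ σ hσ with h0 | ⟨δ, hGδ, hDegδ, hPhi⟩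
    · refine ⟨0, by simp, ?_⟩
      rw [h0, mul_zero, sub_zero]
      exact (Zid m n A).zero_mem
    · have hle : Phi δ ≤ n ^ 2 * m := by
        have := Phi_le δ
        rw [hDegδ] at this
        exact this
      obtain ⟨q', hq'deg, hq'z⟩ := IH (n ^ 2 * m - Phi δ) (by omega) δ hDegδ rfl
      refine ⟨((Equiv.Perm.sign σ : ℤ) : R n) * q', ?_, ?_⟩
      · refine (totalDegree_mul _ _).trans ?_
        rw [sign_cast, totalDegree_C]
        simpa using hq'deg
      · have hmm := Ideal.mul_mem_left (Zid m n A) ((Equiv.Perm.sign σ : ℤ) : R n) hq'z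
        rw [mul_sub] at hmm
        rw [hGδ]
        exact hmm
  classical
  choose! qf hqf1 hqf2 using hterm
  -- assemble
  set Rlow : R n := ∑ σ : Equiv.Perm (Fin m), ((Equiv.Perm.sign σ : ℤ) : R n) * rf σ with hRlowdef
  set S' : R n := ∑ σ ∈ (Finset.univ : Finset (Equiv.Perm (Fin m))).erase 1,
    ((Equiv.Perm.sign σ : ℤ) : R n) * G σ with hS'def
  set qS : R n := ∑ σ ∈ (Finset.univ : Finset (Equiv.Perm (Fin m))).erase 1, qf σ with hqSdef
  have hsplit : fpoly m n A c = (-1 : R n) ^ m * (monomial γ 1 + S') + Rlow := by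
    rw [hdet0]
    have : ∀ σ : Equiv.Perm (Fin m), ((Equiv.Perm.sign σ : ℤ) : R n) *
        ∏ i, (C (A (σ i) (c i)) - Xe m n (σ i) (c i)) =
        (-1 : R n) ^ m * (((Equiv.Perm.sign σ : ℤ) : R n) * G σ) +
          ((Equiv.Perm.sign σ : ℤ) : R n) * rf σ := by
      intro σ
      rw [hrf σ]
      ring
    rw [Finset.sum_congr rfl (fun σ _ => this σ)]
    rw [Finset.sum_add_distrib, ← Finset.mul_sum]
    rw [← Finset.add_sum_erase _ _ (Finset.mem_univ (1 : Equiv.Perm (Fin m)))]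
    rw [hG1]
    simp only [Equiv.Perm.sign_one, Units.val_one, Int.cast_one, one_mul]
    rfl
  have hRlowdeg : Rlow.totalDegree ≤ m - 1 := by
    apply totalDegree_finsetSum_le
    intro σ _
    refine (totalDegree_mul _ _).trans ?_
    rw [sign_cast, totalDegree_C]
    rcases hrfc σ with h0 | hlt
    · rw [h0]; simp
    · omega
  have hqSdeg : qS.totalDegree ≤ m - 1 := by
    apply totalDegree_finsetSum_le
    intro σ hσ
    exact hqf1 σ (Finset.ne_of_mem_erase hσ)
  have hS'z : S' - qS ∈ Zid m n A := by
    rw [hS'def, hqSdef, ← Finset.sum_sub_distrib]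
    apply Ideal.sum_mem
    intro σ hσ
    exact hqf2 σ (Finset.ne_of_mem_erase hσ)
  have hsq : ((-1 : R n) ^ m) * ((-1 : R n) ^ m) = 1 := by
    rw [← pow_add]
    exact Even.neg_one_pow ⟨m, rfl⟩
  refine ⟨-((-1 : R n) ^ m * Rlow) - qS, ?_, ?_⟩
  · have h1 : ((-1 : R n) ^ m * Rlow).totalDegree ≤ m - 1 := by
      refine (totalDegree_mul _ _).trans ?_
      rw [neg_one_pow_C, totalDegree_C]
      simpa using hRlowdeg
    have := totalDegree_sub (-((-1 : R n) ^ m * Rlow)) qS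
    rw [totalDegree_neg] at this
    have hmax : max ((-1 : R n) ^ m * Rlow).totalDegree qS.totalDegree ≤ m - 1 :=
      max_le h1 hqSdeg
    omega
  · have key : monomial γ (1 : ℂ) - (-((-1 : R n) ^ m * Rlow) - qS) =
        (-1 : R n) ^ m * fpoly m n A c - (S' - qS) := by
      linear_combination (-((-1 : R n) ^ m)) * hsplit - (monomial γ (1:ℂ) + S') * hsq
    rw [key]
    exact Submodule.sub_mem _ (Ideal.mul_mem_left _ _ (fpoly_mem_Zid A c)) hS'z

lemma Deg_eq_sum (γ : Fin (n + 1) →₀ ℕ) : Deg γ = γ.sum (fun _ e => e) := by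
  rw [Finsupp.sum_fintype]
  · rfl
  · intro _; rfl

lemma exists_sub_rep (k : ℕ) (γ : Fin (n + 1) →₀ ℕ) (h : k ≤ Deg γ) :
    ∃ β : Fin (n + 1) →₀ ℕ, (∀ s, β s ≤ γ s) ∧ Deg β = k := by
  induction k generalizing γ with
  | zero => exact ⟨0, by simp, Deg_zero⟩
  | succ k ih =>
    have hex : ∃ s, γ s ≠ 0 := by
      by_contra hc
      push_neg at hc
      have : Deg γ = 0 := Finset.sum_eq_zero (fun s _ => hc s)
      omega
    obtain ⟨s, hs⟩ := hex
    set γ₁ : Fin (n + 1) →₀ ℕ := γ - Finsupp.single s 1 with hγ₁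
    have hsum : γ = Finsupp.single s 1 + γ₁ := by
      ext t
      simp only [hγ₁, Finsupp.add_apply, Finsupp.tsub_apply, Finsupp.single_apply]
      by_cases hts : s = t
      · subst hts; simp; omega
      · simp [hts]
    have hdeg : k ≤ Deg γ₁ := by
      have hd := Deg_add (Finsupp.single s 1) γ₁
      rw [← hsum, Deg_single] at hd
      omega
    obtain ⟨β₁, hβ₁le, hβ₁deg⟩ := ih γ₁ hdeg
    refine ⟨β₁ + Finsupp.single s 1, ?_, ?_⟩
    · intro t
      have h1 := hβ₁le t
      simp only [hγ₁, Finsupp.tsub_apply, Finsupp.single_apply] at h1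
      simp only [Finsupp.add_apply, Finsupp.single_apply]
      by_cases hts : s = t
      · subst hts; simp at h1 ⊢; omega
      · simp [hts] at h1 ⊢; omega
    · rw [Deg_add, Deg_single, hβ₁deg]

lemma monomial_reduce (hm : 1 ≤ m) (A : Matrix (Fin m) (Fin (m + n)) ℂ) :
    ∀ (N : ℕ) (γ : Fin (n + 1) →₀ ℕ), Deg γ ≤ N →
    ∃ q : R n, q.totalDegree ≤ m - 1 ∧ monomial γ 1 - q ∈ Zid m n A := by
  intro N
  induction N using Nat.strong_induction_on with
  | _ N IH =>
  intro γ hγN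
  by_cases hsmall : Deg γ ≤ m - 1
  · refine ⟨monomial γ 1, ?_, by rw [sub_self]; exact (Zid m n A).zero_mem⟩
    rw [totalDegree_monomial_one]
    exact hsmall
  · have hge : m ≤ Deg γ := by omega
    obtain ⟨β, hβle, hβdeg⟩ := exists_sub_rep m γ hge
    set γ' : Fin (n + 1) →₀ ℕ := γ - β with hγ'def
    have hsum : γ' + β = γ := by
      ext t
      simp only [hγ'def, Finsupp.add_apply, Finsupp.tsub_apply]
      exact Nat.sub_add_cancel (hβle t)
    have hγ'deg : Deg γ' + m = Deg γ := by
      have := Deg_add γ' β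
      rw [hsum, hβdeg] at this
      omega
    have hmon : monomial γ (1 : ℂ) = monomial γ' 1 * monomial β 1 := by
      rw [monomial_mul, one_mul, hsum]
    obtain ⟨qβ, hqβdeg, hqβz⟩ := deg_m_red hm A (n ^ 2 * m - Phi β) β hβdeg rfl
    have hterm : ∀ δ ∈ qβ.support, ∃ qδ : R n,
        qδ.totalDegree ≤ m - 1 ∧ monomial (γ' + δ) 1 - qδ ∈ Zid m n A := by
      intro δ hδ
      have hδdeg : Deg δ ≤ m - 1 := by
        rw [Deg_eq_sum]
        exact le_trans (le_totalDegree hδ) hqβdeg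
      have hlt : Deg (γ' + δ) < N := by
        rw [Deg_add]
        omega
      exact IH (Deg (γ' + δ)) (by omega) (γ' + δ) le_rfl
    classical
    choose! qd hqd1 hqd2 using hterm
    set q : R n := ∑ δ ∈ qβ.support, coeff δ qβ • qd δ with hqdef
    have hexp : monomial γ' (1 : ℂ) * qβ = ∑ δ ∈ qβ.support, coeff δ qβ • monomial (γ' + δ) 1 := by
      conv_lhs => rw [qβ.as_sum]
      rw [Finset.mul_sum]
      apply Finset.sum_congr rfl
      intro δ _
      rw [monomial_mul, one_mul, smul_monomial, smul_eq_mul, mul_one]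
    have hiden : monomial γ (1 : ℂ) - q = monomial γ' 1 * (monomial β 1 - qβ) +
        ∑ δ ∈ qβ.support, coeff δ qβ • (monomial (γ' + δ) 1 - qd δ) := by
      have hsplit2 : ∑ δ ∈ qβ.support, coeff δ qβ • (monomial (γ' + δ) 1 - qd δ) =
          (∑ δ ∈ qβ.support, coeff δ qβ • monomial (γ' + δ) 1) -
            ∑ δ ∈ qβ.support, coeff δ qβ • qd δ := by
        rw [← Finset.sum_sub_distrib]
        apply Finset.sum_congr rfl
        intro δ _
        rw [smul_sub]
      rw [hmon, hsplit2, ← hexp, hqdef]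
      ring_nf
    refine ⟨q, ?_, ?_⟩
    · apply totalDegree_finsetSum_le
      intro δ hδ
      exact le_trans (totalDegree_smul_le _ _) (hqd1 δ hδ)
    · rw [hiden]
      refine Submodule.add_mem _ (Ideal.mul_mem_left _ _ hqβz) ?_
      apply Ideal.sum_mem
      intro δ hδ
      rw [smul_eq_C_mul]
      exact Ideal.mul_mem_left _ _ (hqd2 δ hδ)

lemma poly_reduce (hm : 1 ≤ m) (A : Matrix (Fin m) (Fin (m + n)) ℂ) (p : R n) :
    ∃ q : R n, q.totalDegree ≤ m - 1 ∧ p - q ∈ Zid m n A := by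
  classical
  have hterm : ∀ γ ∈ p.support, ∃ qγ : R n,
      qγ.totalDegree ≤ m - 1 ∧ monomial γ 1 - qγ ∈ Zid m n A :=
    fun γ _ => monomial_reduce hm A (Deg γ) γ le_rfl
  choose! qg hqg1 hqg2 using hterm
  refine ⟨∑ γ ∈ p.support, coeff γ p • qg γ, ?_, ?_⟩
  · apply totalDegree_finsetSum_le
    intro γ hγ
    exact le_trans (totalDegree_smul_le _ _) (hqg1 γ hγ)
  · have hps : p = ∑ γ ∈ p.support, coeff γ p • monomial γ 1 := by
      conv_lhs => rw [p.as_sum]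
      apply Finset.sum_congr rfl
      intro γ _
      rw [smul_monomial, smul_eq_mul, mul_one]
    have hsum2 : ∑ γ ∈ p.support, coeff γ p • (monomial γ (1 : ℂ) - qg γ)
        = (∑ γ ∈ p.support, coeff γ p • monomial γ 1) - ∑ γ ∈ p.support, coeff γ p • qg γ := by
      rw [← Finset.sum_sub_distrib]
      apply Finset.sum_congr rfl
      intro γ _
      rw [smul_sub]
    have hmem : ∑ γ ∈ p.support, coeff γ p • (monomial γ (1 : ℂ) - qg γ) ∈ Zid m n A := by
      apply Ideal.sum_mem
      intro γ hγ
      rw [smul_eq_C_mul]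
      exact Ideal.mul_mem_left _ _ (hqg2 γ hγ)
    have heq2 : p - ∑ γ ∈ p.support, coeff γ p • qg γ =
        ∑ γ ∈ p.support, coeff γ p • (monomial γ (1 : ℂ) - qg γ) := by
      rw [hsum2, ← hps]
    rw [heq2]
    exact hmem

/-- variables-or-one, indexed by `Fin (n+2)`, with the last index giving `1`. -/
def Y (n : ℕ) (k : Fin (n + 2)) : R n :=
  if h : (k : ℕ) ≤ n then X (⟨(k : ℕ), by omega⟩ : Fin (n + 1)) else 1

abbrev Idx (m n : ℕ) := {s : Finset (Fin (m + n)) // s.card = m - 1}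

def stair (m n : ℕ) (s : Idx m n) (i : Fin (m - 1)) : Fin (n + 2) :=
  ⟨min ((s.1.orderEmbOfFin s.2 i : ℕ) - (i : ℕ)) (n + 1), by omega⟩

def fam (m n : ℕ) (s : Idx m n) : R n := ∏ i : Fin (m - 1), Y n (stair m n s i)

lemma exists_pad_rep' : ∀ (k : ℕ) (γ : Fin (n + 1) →₀ ℕ), Deg γ ≤ k →
    ∃ e : Fin k → Fin (n + 2), monomial γ (1 : ℂ) = ∏ i, Y n (e i) := by
  intro k
  induction k with
  | zero =>
    intro γ h
    have hγ0 : γ = 0 := by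
      ext s
      have := Finset.sum_eq_zero_iff.mp (Nat.le_zero.mp (h : Deg γ ≤ 0)) s (Finset.mem_univ s)
      simpa using this
    refine ⟨Fin.elim0, ?_⟩
    rw [hγ0]
    simp [monomial_zero']
  | succ k ih =>
    intro γ h
    by_cases hγ0 : γ = 0
    · refine ⟨fun _ => ⟨n + 1, by omega⟩, ?_⟩
      have hY1 : Y n (⟨n + 1, by omega⟩ : Fin (n + 2)) = 1 := by
        unfold Y
        rw [dif_neg]
        simp
      rw [hγ0]
      simp [monomial_zero', hY1]
    · have hex : ∃ s, γ s ≠ 0 := by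
        by_contra hc
        push_neg at hc
        exact hγ0 (by ext s; simpa using hc s)
      obtain ⟨s, hs⟩ := hex
      set γ₁ : Fin (n + 1) →₀ ℕ := γ - Finsupp.single s 1 with hγ₁
      have hsum : γ = Finsupp.single s 1 + γ₁ := by
        ext t
        simp only [hγ₁, Finsupp.add_apply, Finsupp.tsub_apply, Finsupp.single_apply]
        by_cases hts : s = t
        · subst hts; simp; omega
        · simp [hts]
      have hdeg : Deg γ₁ ≤ k := by
        have hd := Deg_add (Finsupp.single s 1) γ₁
        rw [← hsum, Deg_single] at hd
        omega
      obtain ⟨e₁, he₁⟩ := ih γ₁ hdeg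
      refine ⟨Fin.cons ⟨(s : ℕ), by omega⟩ e₁, ?_⟩
      rw [Fin.prod_univ_succ]
      simp only [Fin.cons_zero, Fin.cons_succ]
      have hYs : Y n (⟨(s : ℕ), by omega⟩ : Fin (n + 2)) = X s := by
        unfold Y
        rw [dif_pos (by simp; omega)]
      rw [hYs, ← he₁, hsum]
      rw [X, monomial_mul, one_mul]

lemma exists_pad_rep (k : ℕ) (γ : Fin (n + 1) →₀ ℕ) (h : Deg γ ≤ k) :
    ∃ e : Fin k → Fin (n + 2), Monotone e ∧ monomial γ (1 : ℂ) = ∏ i, Y n (e i) := by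
  obtain ⟨e, he⟩ := exists_pad_rep' k γ h
  refine ⟨e ∘ Tuple.sort e, Tuple.monotone_sort e, ?_⟩
  rw [he]
  exact (Equiv.prod_comp (Tuple.sort e) (fun i => Y n (e i))).symm

lemma monomial_mem_span (hm : 1 ≤ m) (γ : Fin (n + 1) →₀ ℕ) (h : Deg γ ≤ m - 1) :
    monomial γ (1 : ℂ) ∈ Submodule.span ℂ (Set.range (fam m n)) := by
  classical
  obtain ⟨e, hemono, hprod⟩ := exists_pad_rep (m - 1) γ h
  have helt : ∀ i : Fin (m - 1), (e i : ℕ) ≤ n + 1 := fun i => by have := (e i).isLt; omega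
  set c : Fin (m - 1) → Fin (m + n) := fun i =>
    ⟨(e i : ℕ) + (i : ℕ), by have h1 := (e i).isLt; have h2 := i.isLt; omega⟩ with hcdef
  have hcval : ∀ i, (c i : ℕ) = (e i : ℕ) + (i : ℕ) := fun i => rfl
  have hstrict : StrictMono c := by
    intro i k hik
    have h1 : (i : ℕ) < (k : ℕ) := hik
    have h2 : (e i : ℕ) ≤ (e k : ℕ) := hemono (le_of_lt hik)
    show (c i : ℕ) < (c k : ℕ)
    rw [hcval, hcval]
    omega
  set s : Finset (Fin (m + n)) := Finset.image c Finset.univ with hsdef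
  have hcard : s.card = m - 1 := by
    rw [hsdef, Finset.card_image_of_injective _ hstrict.injective, Finset.card_univ,
      Fintype.card_fin]
  have hceq : c = s.orderEmbOfFin hcard :=
    Finset.orderEmbOfFin_unique hcard
      (fun x => Finset.mem_image_of_mem c (Finset.mem_univ x)) hstrict
  have hfameq : fam m n ⟨s, hcard⟩ = monomial γ 1 := by
    unfold fam
    rw [hprod]
    apply Finset.prod_congr rfl
    intro i _
    congr 1
    unfold stair
    apply Fin.ext
    simp only []
    rw [← hceq, hcval]
    have := helt i
    omega
  rw [← hfameq]
  exact Submodule.subset_span ⟨⟨s, hcard⟩, rfl⟩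

lemma low_deg_mem_span (hm : 1 ≤ m) (q : R n) (hq : q.totalDegree ≤ m - 1) :
    q ∈ Submodule.span ℂ (Set.range (fam m n)) := by
  classical
  have hps : q = ∑ γ ∈ q.support, coeff γ q • monomial γ 1 := by
    conv_lhs => rw [q.as_sum]
    apply Finset.sum_congr rfl
    intro γ _
    rw [smul_monomial, smul_eq_mul, mul_one]
  rw [hps]
  apply Submodule.sum_mem
  intro γ hγ
  apply Submodule.smul_mem
  apply monomial_mem_span hm
  rw [Deg_eq_sum]
  exact le_trans (le_totalDegree hγ) hq

/-- evaluation on a finite set of points, as a linear map -/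
def evS (S : Finset (Fin (n + 1) → ℂ)) : R n →ₗ[ℂ] (↥S → ℂ) where
  toFun p := fun y => eval (y : Fin (n + 1) → ℂ) p
  map_add' p q := by funext y; simp
  map_smul' c p := by funext y; simp [smul_eval]

lemma card_bound (hm : 1 ≤ m) (A : Matrix (Fin m) (Fin (m + n)) ℂ)
    (S : Finset (Fin (n + 1) → ℂ)) (hS : ↑S ⊆ eigLocus m n A) :
    S.card ≤ (m + n).choose (n + 1) := by
  classical
  set V := Submodule.span ℂ (Set.range (fam m n)) with hV
  have hindicator : ∀ y : ↥S,
      (fun z : ↥S => if y = z then (1 : ℂ) else 0) ∈ Submodule.map (evS S) V := by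
    intro y
    have hne : ∀ y' ∈ S.erase (y : Fin (n + 1) → ℂ), ∃ t, y' t ≠ (y : Fin (n + 1) → ℂ) t := by
      intro y' h
      exact Function.ne_iff.mp (Finset.mem_erase.mp h).1
    choose! pick hpick using hne
    set p : R n := ∏ y' ∈ S.erase (y : Fin (n + 1) → ℂ),
      (X (pick y') - C (y' (pick y'))) with hp
    have hevaly : eval (y : Fin (n + 1) → ℂ) p ≠ 0 := by
      rw [hp, map_prod]
      rw [Finset.prod_ne_zero_iff]
      intro y' hy'
      simp only [map_sub, eval_X, eval_C]
      exact sub_ne_zero.mpr (Ne.symm (hpick y' hy'))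
    have hevalz : ∀ y'' ∈ S, y'' ≠ (y : Fin (n + 1) → ℂ) → eval y'' p = 0 := by
      intro y'' h1 h2
      rw [hp, map_prod]
      apply Finset.prod_eq_zero (Finset.mem_erase.mpr ⟨h2, h1⟩)
      simp
    obtain ⟨q, hqdeg, hqz⟩ := poly_reduce hm A p
    have hqmem : q ∈ V := low_deg_mem_span hm q hqdeg
    have hevq : ∀ y'' ∈ S, eval y'' q = eval y'' p := by
      intro y'' h
      have hz := hqz y'' (hS h)
      rw [map_sub] at hz
      have := sub_eq_zero.mp hz
      exact this.symm
    refine ⟨(eval (y : Fin (n + 1) → ℂ) p)⁻¹ • q, Submodule.smul_mem _ _ hqmem, ?_⟩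
    funext z
    show eval (z : Fin (n + 1) → ℂ) ((eval (y : Fin (n + 1) → ℂ) p)⁻¹ • q) = _
    rw [smul_eval]
    by_cases hz : y = z
    · subst hz
      rw [if_pos rfl]
      rw [hevq (y : Fin (n + 1) → ℂ) y.2]
      exact inv_mul_cancel₀ hevaly
    · rw [if_neg hz]
      have hzny : (z : Fin (n + 1) → ℂ) ≠ (y : Fin (n + 1) → ℂ) := by
        intro hc
        exact hz (Subtype.ext hc).symm
      rw [hevq (z : Fin (n + 1) → ℂ) z.2, hevalz (z : Fin (n + 1) → ℂ) z.2 hzny, mul_zero]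
  have htop : Submodule.map (evS S) V = ⊤ := by
    rw [Submodule.eq_top_iff']
    intro φ
    have hφ := pi_eq_sum_univ φ
    rw [hφ]
    apply Submodule.sum_mem
    intro y _
    exact Submodule.smul_mem _ _ (hindicator y)
  have h1 : S.card = Module.finrank ℂ (↥S → ℂ) := by
    rw [Module.finrank_pi ℂ, Fintype.card_coe]
  have h2 : Submodule.map (evS S) V =
      Submodule.span ℂ (Set.range (fun i => evS S (fam m n i))) := by
    rw [hV, Submodule.map_span, ← Set.range_comp]
    rfl
  have h3 : Module.finrank ℂ (↥S → ℂ) ≤ Fintype.card (Idx m n) := by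
    have hrle : Module.finrank ℂ
        (Submodule.span ℂ (Set.range (fun i => evS S (fam m n i)))) ≤ Fintype.card (Idx m n) :=
      finrank_range_le_card _
    calc Module.finrank ℂ (↥S → ℂ)
        = Module.finrank ℂ (⊤ : Submodule ℂ (↥S → ℂ)) := (finrank_top ℂ _).symm
      _ = Module.finrank ℂ
          (Submodule.span ℂ (Set.range (fun i => evS S (fam m n i)))) := by rw [← h2, htop]
      _ ≤ Fintype.card (Idx m n) := hrle
  have hidxcard : Fintype.card (Idx m n) = (m + n).choose (m - 1) := by
    rw [Fintype.card_finset_len, Fintype.card_fin]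
  have hchoose : (m + n).choose (m - 1) = (m + n).choose (n + 1) := by
    have hle : m - 1 ≤ m + n := by omega
    have h := Nat.choose_symm hle
    have heq : m + n - (m - 1) = n + 1 := by omega
    rw [heq] at h
    omega
  omega

end EigProof

theorem stmt0 (m n : ℕ) (hm : 1 ≤ m) (A : Matrix (Fin m) (Fin (m + n)) ℂ) :
    (eigLocus m n A).Finite ∧ (eigLocus m n A).ncard ≤ (m + n).choose (n + 1) := by
  classical
  have key := EigProof.card_bound (m := m) (n := n) hm A
  have hfin : (eigLocus m n A).Finite := by
    by_contra hinf
    obtain ⟨t, hts, hcard⟩ :=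
      Set.Infinite.exists_subset_card_eq hinf ((m + n).choose (n + 1) + 1)
    have := key t hts
    omega
  refine ⟨hfin, ?_⟩
  rw [Set.ncard_eq_toFinset_card _ hfin]
  exact key hfin.toFinset (by rw [Set.Finite.coe_toFinset])
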